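/- Let A ⊆ B be a non-degenerate C*-inclusion and P : B → A a conditional expectation. If every virtual commutant of A in B has range contained in A, then P preserves slices: P(M) ⊆ M for every slice M ⊆ B. -/

import Mathlib

open scoped MultiplierAlgebra

noncomputable section

namespace NCCartan

variable {B : Type*} [NonUnitalCStarAlgebra B] [PartialOrder B] [StarOrderedRing B]

/-- A closed two-sided ideal of the C*-subalgebra of `B` with carrier `A`. -/
structure CIdealIn (A : Set B) where
  carrier : Set B
  subset : carrier ⊆ A
  zero_mem : (0 : B) ∈ carrier
  add_mem : ∀ x ∈ carrier, ∀ y ∈ carrier, x + y ∈ carrier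
  smul_mem : ∀ (c : ℂ), ∀ x ∈ carrier, c • x ∈ carrier
  mul_left : ∀ a ∈ A, ∀ x ∈ carrier, a * x ∈ carrier
  mul_right : ∀ a ∈ A, ∀ x ∈ carrier, x * a ∈ carrier
  isClosed : IsClosed carrier

/-- The inclusion `A ⊆ B` is non-degenerate: the closed linear span of `A·B` is all of `B`. -/
def Nondegenerate (A : Set B) : Prop :=
  Dense ((Submodule.span ℂ {x : B | ∃ a ∈ A, ∃ b : B, x = a * b} : Submodule ℂ B) : Set B)

/-- `b` is a normaliser of `A` in `B`. -/
def IsNormalizerOf (A : Set B) (b : B) : Prop :=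
  (∀ a ∈ A, b * a * star b ∈ A) ∧ (∀ a ∈ A, star b * a * b ∈ A)

/-- The inclusion `A ⊆ B` is regular: it is non-degenerate and the linear span of the
normalisers is dense in `B`. -/
def RegularInclusion (A : Set B) : Prop :=
  Nondegenerate A ∧
    Dense ((Submodule.span ℂ {b : B | IsNormalizerOf A b} : Submodule ℂ B) : Set B)

/-- A conditional expectation from `B` onto the C*-subalgebra with carrier `A`. -/
structure CondExp (A : Set B) where
  toFun : B →ₗ[ℂ] B
  mem_range : ∀ b : B, toFun b ∈ A
  fixes : ∀ a ∈ A, toFun a = a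
  contractive : ∀ b : B, ‖toFun b‖ ≤ ‖b‖
  positive : ∀ b : B, 0 ≤ b → 0 ≤ toFun b
  bimodule : ∀ a ∈ A, ∀ c ∈ A, ∀ b : B, toFun (a * b * c) = a * toFun b * c

/-- `E` is faithful: `E(b* b) = 0` implies `b = 0`. -/
def CondExp.Faithful {A : Set B} (E : CondExp A) : Prop :=
  ∀ b : B, E.toFun (star b * b) = 0 → b = 0

/-- `E` is almost faithful: `E((b c)* (b c)) = 0` for all `c` implies `b = 0`. -/
def CondExp.AlmostFaithful {A : Set B} (E : CondExp A) : Prop :=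
  ∀ b : B, (∀ c : B, E.toFun (star (b * c) * (b * c)) = 0) → b = 0

/-- The set `IBI`: the closed linear span of `{x b y : x, y ∈ I, b ∈ B}`. -/
def IBISet (I : Set B) : Set B :=
  closure ((Submodule.span ℂ {z : B | ∃ p ∈ I, ∃ b : B, ∃ q ∈ I, z = p * b * q} :
    Submodule ℂ B) : Set B)

/-- A conditional expectation from the C*-subalgebra of `B` with carrier `C` onto the
ideal with carrier `I ⊆ C`; only the values of `toFun` on `C` are relevant. -/
structure CondExpOnSub (C : Set B) (I : Set B) where
  toFun : B → B
  map_add : ∀ x ∈ C, ∀ y ∈ C, toFun (x + y) = toFun x + toFun y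
  map_smul : ∀ (c : ℂ), ∀ x ∈ C, toFun (c • x) = c • toFun x
  mem_range : ∀ x ∈ C, toFun x ∈ I
  fixes : ∀ x ∈ I, toFun x = x
  contractive : ∀ x ∈ C, ‖toFun x‖ ≤ ‖x‖
  positive : ∀ x ∈ C, 0 ≤ x → 0 ≤ toFun x
  bimodule : ∀ p ∈ I, ∀ q ∈ I, ∀ b ∈ C, toFun (p * b * q) = p * toFun b * q

def CondExpOnSub.Faithful {C I : Set B} (P : CondExpOnSub C I) : Prop :=
  ∀ x ∈ C, P.toFun (star x * x) = 0 → x = 0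

def CondExpOnSub.AlmostFaithful {C I : Set B} (P : CondExpOnSub C I) : Prop :=
  ∀ x ∈ C, (∀ c ∈ C, P.toFun (star (x * c) * (x * c)) = 0) → x = 0

/-- A virtual commutant of `A` in `B` defined on the ideal with carrier `I`;
only the values of `toFun` on `I` are relevant. -/
structure VirtualCommutant (A : Set B) (I : Set B) where
  toFun : B → B
  map_add : ∀ x ∈ I, ∀ y ∈ I, toFun (x + y) = toFun x + toFun y
  map_smul : ∀ (c : ℂ), ∀ x ∈ I, toFun (c • x) = c • toFun x
  left_mod : ∀ a ∈ A, ∀ x ∈ I, toFun (a * x) = a * toFun x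
  right_mod : ∀ a ∈ A, ∀ x ∈ I, toFun (x * a) = toFun x * a

/-- A slice for the inclusion `A ⊆ B`: a closed linear subspace `M` with `A·M ⊆ M`,
`M·A ⊆ M`, `M*·M ⊆ A` and `M·M* ⊆ A`. -/
structure IsSlice (A : Set B) (M : Submodule ℂ B) : Prop where
  isClosed : IsClosed (M : Set B)
  mul_left : ∀ a ∈ A, ∀ m ∈ M, a * m ∈ M
  mul_right : ∀ a ∈ A, ∀ m ∈ M, m * a ∈ M
  star_mul_mem : ∀ m ∈ M, ∀ n ∈ M, star m * n ∈ A
  mul_star_mem : ∀ m ∈ M, ∀ n ∈ M, m * star n ∈ A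

/-- An isomorphism of Hilbert `A`-bimodules from the ideal with carrier `I` onto the
subset `M` of `B`; only the values of `toFun` on `I` are relevant. -/
structure HilbertBimoduleIso (A : Set B) (I : Set B) (M : Set B) where
  toFun : B → B
  map_add : ∀ x ∈ I, ∀ y ∈ I, toFun (x + y) = toFun x + toFun y
  map_smul : ∀ (c : ℂ), ∀ x ∈ I, toFun (c • x) = c • toFun x
  maps_into : ∀ x ∈ I, toFun x ∈ M
  injOn : ∀ x ∈ I, ∀ y ∈ I, toFun x = toFun y → x = y
  surjOn : ∀ m ∈ M, ∃ x ∈ I, toFun x = m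
  bimod : ∀ a ∈ A, ∀ b ∈ A, ∀ x ∈ I, toFun (a * x * b) = a * toFun x * b
  inner_right : ∀ x ∈ I, ∀ y ∈ I, star (toFun x) * toFun y = star x * y
  inner_left : ∀ x ∈ I, ∀ y ∈ I, toFun x * star (toFun y) = x * star y

/-- A hereditary C*-subalgebra `D` of the C*-subalgebra with carrier `A`. -/
structure IsHereditarySubalgebra (A : Set B) (D : Set B) : Prop where
  subset : D ⊆ A
  zero_mem : (0 : B) ∈ D
  add_mem : ∀ x ∈ D, ∀ y ∈ D, x + y ∈ D
  smul_mem : ∀ (c : ℂ), ∀ x ∈ D, c • x ∈ D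
  mul_mem : ∀ x ∈ D, ∀ y ∈ D, x * y ∈ D
  star_mem : ∀ x ∈ D, star x ∈ D
  isClosed : IsClosed D
  hereditary : ∀ x ∈ A, ∀ a ∈ D, 0 ≤ x → x ≤ a → x ∈ D

/-- Kishimoto's condition for an element `y ∈ B` relative to `A`. -/
def Kishimoto (A : Set B) (y : B) : Prop :=
  ∀ D : Set B, IsHereditarySubalgebra A D → D ≠ {0} → ∀ ε : ℝ, 0 < ε →
    ∃ a ∈ D, 0 ≤ a ∧ ‖a‖ = 1 ∧ ‖a * y * a‖ < ε

/-- The inclusion `A ⊆ B` is aperiodic. -/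
def AperiodicInclusion (A : Set B) : Prop :=
  ∀ b : B, ∀ D : Set B, IsHereditarySubalgebra A D → D ≠ {0} → ∀ ε : ℝ, 0 < ε →
    ∃ a ∈ D, 0 ≤ a ∧ ‖a‖ = 1 ∧ Metric.infDist (a * b * a) A < ε

/-- Every virtual commutant of `A` in `B` has range contained in `A`. -/
def VirtualCommutantsTrivial (A : Set B) : Prop :=
  ∀ I : CIdealIn A, ∀ φ : VirtualCommutant A I.carrier, ∀ x ∈ I.carrier, φ.toFun x ∈ A

/-- For every closed two-sided ideal `I` of `A`, every multiplier of `IBI` commuting with `I`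
maps `I` into `I`. -/
def CommutingMultipliersTrivial (A : Set B) : Prop :=
  ∀ I : CIdealIn A, ∀ C : NonUnitalStarSubalgebra ℂ B, (C : Set B) = IBISet I.carrier →
    ∀ τ : 𝓜(ℂ, C), (∀ x : C, (x : B) ∈ I.carrier → τ.fst x = τ.snd x) →
      ∀ x : C, (x : B) ∈ I.carrier → ((τ.fst x : C) : B) ∈ I.carrier

/-- Every slice isomorphic as a Hilbert `A`-bimodule to a closed two-sided ideal `I` of `A`
equals `I`. -/
def SlicesIsoIdealsTrivial (A : Set B) : Prop :=
  ∀ I : CIdealIn A, ∀ M : Submodule ℂ B, IsSlice A M →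
    Nonempty (HilbertBimoduleIso A I.carrier (M : Set B)) → (M : Set B) = I.carrier

/-- `E` is faithful and, for every closed two-sided ideal `I` of `A`, the restriction of `E`
to `IBI` is the only conditional expectation from `IBI` onto `I`. -/
def UniqueExpectationOnIdeals (A : Set B) (E : CondExp A) : Prop :=
  E.Faithful ∧ ∀ I : CIdealIn A,
    (∃ P : CondExpOnSub (IBISet I.carrier) I.carrier,
      ∀ x ∈ IBISet I.carrier, P.toFun x = E.toFun x) ∧
    (∀ P : CondExpOnSub (IBISet I.carrier) I.carrier,
      ∀ x ∈ IBISet I.carrier, P.toFun x = E.toFun x)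

/-- For every closed two-sided ideal `I` of `A` there is exactly one faithful conditional
expectation from `IBI` onto `I`. -/
def UniqueFaithfulExpectationOnIdeals (A : Set B) : Prop :=
  ∀ I : CIdealIn A,
    ∃ P : CondExpOnSub (IBISet I.carrier) I.carrier, P.Faithful ∧
      ∀ Q : CondExpOnSub (IBISet I.carrier) I.carrier, Q.Faithful →
        ∀ x ∈ IBISet I.carrier, Q.toFun x = P.toFun x

/-- `A ⊆ B` is a noncommutative Cartan subalgebra in the sense of Exel. -/
def IsNCCartan (A : Set B) : Prop :=
  RegularInclusion A ∧ (∃ E : CondExp A, E.AlmostFaithful) ∧ VirtualCommutantsTrivial A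

/-- `A` detects ideals in `B`. -/
def DetectsIdeals (A : Set B) : Prop :=
  ∀ J : CIdealIn (Set.univ : Set B), J.carrier ≠ {0} → J.carrier ∩ A ≠ {0}

/-- `A` supports `B`. -/
def Supports (A : Set B) : Prop :=
  ∀ b : B, 0 ≤ b → b ≠ 0 → ∃ a ∈ A, 0 ≤ a ∧ a ≠ 0 ∧
    ∀ ε : ℝ, 0 < ε → ∃ x : B, ‖star x * b * x - a‖ < ε

/-- The C*-algebra with carrier `A` is prime: any two nonzero closed two-sided ideals have
nonzero intersection. -/
def IsPrimeCStarSet (A : Set B) : Prop :=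
  ∀ I J : CIdealIn A, I.carrier ≠ {0} → J.carrier ≠ {0} → I.carrier ∩ J.carrier ≠ {0}

end NCCartan

open NCCartan


set_option linter.unusedSectionVars false
set_option linter.unusedVariables false
set_option linter.unnecessarySimpa false
set_option maxHeartbeats 1000000

namespace SliceAux



variable {B : Type*} [NonUnitalCStarAlgebra B] [PartialOrder B] [StarOrderedRing B]

/-- powers of an element in a non-unital algebra: `pw b n = b^(n+1)`. -/
def pw (b : B) : ℕ → B
  | 0 => b
  | n+1 => pw b n * b

lemma pw_mul (b : B) (n k : ℕ) : pw b n * pw b k = pw b (n + k + 1) := by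
  induction k with
  | zero => rfl
  | succ k ih =>
    show pw b n * (pw b k * b) = _
    rw [← mul_assoc, ih]; rfl

lemma pw_comm (b : B) (n : ℕ) : b * pw b n = pw b n * b := by
  induction n with
  | zero => rfl
  | succ n ih =>
    show b * (pw b n * b) = pw b n * b * b
    rw [← mul_assoc, ih]

lemma pw_star {b : B} (hb : IsSelfAdjoint b) (n : ℕ) : star (pw b n) = pw b n := by
  induction n with
  | zero => exact hb.star_eq
  | succ n ih =>
    show star (pw b n * b) = _
    rw [star_mul, hb.star_eq, ih]
    cases n with
    | zero => rfl
    | succ k => show b * (pw b k * b) = pw b k * b * b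
                rw [← mul_assoc, pw_comm]

/-- membership of `cfcₙ f b` in any closed additively/ℝ-smul-closed set containing powers. -/
lemma cfcn_mem_of_closed {b : B} (hb : IsSelfAdjoint b) (f : ℝ → ℝ) (T : Set B)
    (hTc : IsClosed T) (h0 : (0:B) ∈ T)
    (hadd : ∀ x ∈ T, ∀ y ∈ T, x + y ∈ T)
    (hsmul : ∀ (r : ℝ), ∀ x ∈ T, r • x ∈ T)
    (hpow : ∀ n : ℕ, pw b n ∈ T) :
    cfcₙ f b ∈ T := by
  set V : Submodule ℝ B := Submodule.span ℝ (Set.range (pw b)) with hV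
  have hVT : (V : Set B) ⊆ T := by
    intro x hx
    induction hx using Submodule.span_induction with
    | mem x hx => obtain ⟨n, rfl⟩ := hx; exact hpow n
    | zero => exact h0
    | add x y _ _ hx hy => exact hadd _ hx _ hy
    | smul r x _ hx => exact hsmul r _ hx
  have hmulV : ∀ x ∈ V, ∀ y ∈ V, x * y ∈ V := by
    intro x hx y hy
    induction hx using Submodule.span_induction with
    | mem x hx =>
      obtain ⟨n, rfl⟩ := hx
      induction hy using Submodule.span_induction with
      | mem y hy =>
        obtain ⟨k, rfl⟩ := hy
        rw [pw_mul]
        exact Submodule.subset_span ⟨n + k + 1, rfl⟩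
      | zero => simp
      | add y z _ _ h1 h2 => rw [mul_add]; exact add_mem h1 h2
      | smul r y _ h1 => rw [mul_smul_comm]; exact Submodule.smul_mem _ _ h1
    | zero => simp
    | add x z _ _ h1 h2 => rw [add_mul]; exact add_mem h1 h2
    | smul r x _ h1 => rw [smul_mul_assoc]; exact Submodule.smul_mem _ _ h1
  have hstarV : ∀ x ∈ V, star x ∈ V := by
    intro x hx
    induction hx using Submodule.span_induction with
    | mem x hx =>
      obtain ⟨n, rfl⟩ := hx
      rw [pw_star hb]; exact Submodule.subset_span ⟨n, rfl⟩
    | zero => simp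
    | add x y _ _ h1 h2 => rw [star_add]; exact add_mem h1 h2
    | smul r x _ h1 => rw [star_smul, star_trivial]; exact Submodule.smul_mem _ _ h1
  suffices h : cfcₙ f b ∈ closure (V : Set B) from closure_minimal hVT hTc h
  by_cases hfc : ContinuousOn f (quasispectrum ℝ b) ∧ f 0 = 0
  · obtain ⟨hfc, hf0⟩ := hfc
    rw [cfcₙ_apply f b hfc hf0 hb]
    set g : ContinuousMapZero (quasispectrum ℝ b) ℝ := ⟨⟨_, hfc.restrict⟩, hf0⟩ with hg
    have hdense := ContinuousMapZero.adjoin_id_dense (quasispectrum ℝ b)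
    have h₁ := (cfcₙHom_isClosedEmbedding hb).continuous.range_subset_closure_image_dense hdense
      ⟨g, rfl⟩
    have himg : (cfcₙHom hb) ''
        ((NonUnitalStarAlgebra.adjoin ℝ {(ContinuousMapZero.id (quasispectrum ℝ b) :
          ContinuousMapZero (quasispectrum ℝ b) ℝ)} :
            NonUnitalStarSubalgebra ℝ (ContinuousMapZero (quasispectrum ℝ b) ℝ)) :
          Set (ContinuousMapZero (quasispectrum ℝ b) ℝ)) ⊆ (V : Set B) := by
      rintro - ⟨h, hh, rfl⟩
      induction hh using NonUnitalStarAlgebra.adjoin_induction with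
      | mem x hx =>
        rw [Set.mem_singleton_iff] at hx
        subst hx
        have hid : (cfcₙHom hb) (ContinuousMapZero.id (quasispectrum ℝ b)) = b := cfcₙHom_id hb
        rw [hid]
        exact Submodule.subset_span ⟨0, rfl⟩
      | add x y _ _ h1 h2 => rw [map_add]; exact add_mem h1 h2
      | zero => rw [map_zero]; exact zero_mem V
      | mul x y _ _ h1 h2 => rw [map_mul]; exact hmulV _ h1 _ h2
      | smul r x _ h1 => rw [map_smul]; exact Submodule.smul_mem _ _ h1
      | star x _ h1 => rw [map_star]; exact hstarV _ h1
    exact closure_mono himg h₁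
  · rw [cfcₙ_apply_of_not_and_and b (f := f) (fun h => hfc ⟨h.2.1, h.2.2⟩)]
    exact subset_closure (zero_mem V)






/-- The function `t ↦ t/(t+c)`. -/
def gfun (c : ℝ) : ℝ → ℝ := fun t => t * (t + c)⁻¹

lemma gfun_zero (c : ℝ) : gfun c 0 = 0 := by simp [gfun]

variable {B : Type*} [NonUnitalCStarAlgebra B] [PartialOrder B] [StarOrderedRing B]

lemma quasi_nonneg {b : B} (hb0 : 0 ≤ b) : ∀ t ∈ quasispectrum ℝ b, (0:ℝ) ≤ t :=
  fun t ht => quasispectrum_nonneg_of_nonneg b hb0 t ht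

lemma gfun_contOn {b : B} (hb0 : 0 ≤ b) {c : ℝ} (hc : 0 < c) :
    ContinuousOn (gfun c) (quasispectrum ℝ b) := by
  apply ContinuousOn.mul continuousOn_id
  apply ContinuousOn.inv₀ (by fun_prop)
  intro t ht
  have := quasi_nonneg hb0 t ht
  positivity

lemma norm_cfcn_g_le_one {b : B} (hb0 : 0 ≤ b) {c : ℝ} (hc : 0 < c) :
    ‖cfcₙ (gfun c) b‖ ≤ 1 := by
  apply norm_cfcₙ_le
  intro t ht
  have ht0 := quasi_nonneg hb0 t ht
  rw [gfun, Real.norm_eq_abs, abs_of_nonneg (by positivity)]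
  rw [mul_inv_le_iff₀ (by positivity)]
  linarith

lemma cfcn_g_selfAdjoint {b : B} (c : ℝ) (hb : IsSelfAdjoint b) :
    IsSelfAdjoint (cfcₙ (gfun c) b) :=
  cfcₙ_predicate _ b

/-- Key approximation: `‖m - m·g(m*m)‖² ≤ c/4`. -/
lemma approx_mul_g (m : B) {c : ℝ} (hc : 0 < c) :
    ‖m - m * cfcₙ (gfun c) (star m * m)‖ * ‖m - m * cfcₙ (gfun c) (star m * m)‖ ≤ c/4 := by
  set b : B := star m * m with hbdef
  have hb0 : 0 ≤ b := star_mul_self_nonneg m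
  have hb : IsSelfAdjoint b := hb0.isSelfAdjoint
  set u : B := cfcₙ (gfun c) b with hudef
  have hu : IsSelfAdjoint u := cfcₙ_predicate _ b
  have hgc : ContinuousOn (gfun c) (quasispectrum ℝ b) := gfun_contOn hb0 hc
  have hg0 : gfun c 0 = 0 := gfun_zero c
  have hidc : ContinuousOn (fun t : ℝ => t) (quasispectrum ℝ b) := continuousOn_id
  have hE : star (m - m * u) * (m - m * u)
      = b - b * u - u * b + u * (b * u) := by
    rw [star_sub, star_mul, hu.star_eq]
    rw [hbdef]
    noncomm_ring
  have e4 : cfcₙ (fun t : ℝ => t) b = b := cfcₙ_id' ℝ b hb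
  have e1 : cfcₙ (fun t : ℝ => t * gfun c t) b = b * u := by
    rw [cfcₙ_mul _ _ b hidc rfl hgc hg0, e4]
  have e2 : cfcₙ (fun t : ℝ => gfun c t * t) b = u * b := by
    rw [cfcₙ_mul _ _ b hgc hg0 hidc rfl, e4]
  have e3 : cfcₙ (fun t : ℝ => gfun c t * (t * gfun c t)) b = u * (b * u) := by
    rw [cfcₙ_mul (gfun c) (fun t => t * gfun c t) b hgc hg0 (hidc.mul hgc) (by simpa using hg0), e1]
  have hEc : star (m - m * u) * (m - m * u)
      = cfcₙ (fun t : ℝ => t - t * gfun c t - gfun c t * t + gfun c t * (t * gfun c t)) b := by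
    rw [cfcₙ_add (fun t => t - t * gfun c t - gfun c t * t) (fun t => gfun c t * (t * gfun c t)) b
        ((hidc.sub (hidc.mul hgc)).sub (hgc.mul hidc)) (by simp [hg0])
        (hgc.mul (hidc.mul hgc)) (by simp [hg0]),
      cfcₙ_sub (fun t => t - t * gfun c t) (fun t => gfun c t * t) b (hidc.sub (hidc.mul hgc)) (by simp [hg0]) (hgc.mul hidc) (by simp [hg0]),
      cfcₙ_sub (fun t => t) (fun t => t * gfun c t) b hidc rfl (hidc.mul hgc) (by simp [hg0]), e1, e2, e3, e4, hE]
  rw [← CStarRing.norm_star_mul_self, hEc]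
  apply norm_cfcₙ_le
  intro t ht
  have ht0 := quasi_nonneg hb0 t ht
  have htc : 0 < t + c := by linarith
  have hsimp : t - t * gfun c t - gfun c t * t + gfun c t * (t * gfun c t)
      = t * (c / (t + c))^2 := by
    rw [gfun]
    field_simp
    ring
  rw [hsimp, Real.norm_eq_abs, abs_of_nonneg (by positivity), div_pow,
    ← mul_div_assoc, div_le_div_iff₀ (by positivity) (by norm_num)]
  nlinarith [sq_nonneg (t - c)]




lemma le_half_of_sq {x ε : ℝ} (hx : 0 ≤ x) (hε : 0 < ε) (h : x * x ≤ ε^2/4) : x ≤ ε/2 := by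
  nlinarith [sq_nonneg (x - ε/2), sq_nonneg (x + ε/2)]

lemma approx_g_mul (m : B) {c : ℝ} (hc : 0 < c) :
    ‖m - cfcₙ (gfun c) (m * star m) * m‖ * ‖m - cfcₙ (gfun c) (m * star m) * m‖ ≤ c/4 := by
  have h := approx_mul_g (star m) hc
  rw [star_star] at h
  have hw : IsSelfAdjoint (cfcₙ (gfun c) (m * star m)) := cfcₙ_predicate _ _
  have hnorm : ‖m - cfcₙ (gfun c) (m * star m) * m‖
      = ‖star m - star m * cfcₙ (gfun c) (m * star m)‖ := by
    rw [← norm_star (m - cfcₙ (gfun c) (m * star m) * m), star_sub, star_mul, hw.star_eq]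
  rw [hnorm]
  exact h

/-- Two-sided approximation `m ≈ w * m * u` with `w, u` functions of `m m*` and `m* m`. -/
lemma two_sided_approx (m : B) {ε : ℝ} (hε : 0 < ε) :
    ‖m - cfcₙ (gfun (ε^2)) (m * star m) * m * cfcₙ (gfun (ε^2)) (star m * m)‖ ≤ ε := by
  have hc : (0:ℝ) < ε^2 := by positivity
  set w := cfcₙ (gfun (ε^2)) (m * star m) with hwdef
  set u := cfcₙ (gfun (ε^2)) (star m * m) with hudef
  have h1 : ‖m - w * m‖ ≤ ε/2 :=
    le_half_of_sq (norm_nonneg _) hε (approx_g_mul m hc)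
  have h2 : ‖m - m * u‖ ≤ ε/2 :=
    le_half_of_sq (norm_nonneg _) hε (approx_mul_g m hc)
  have hu1 : ‖u‖ ≤ 1 := norm_cfcn_g_le_one (star_mul_self_nonneg m) hc
  have hdecomp : m - w * m * u = (m - m * u) + (m - w * m) * u := by noncomm_ring
  calc ‖m - w * m * u‖ = ‖(m - m * u) + (m - w * m) * u‖ := by rw [hdecomp]
  _ ≤ ‖m - m * u‖ + ‖(m - w * m) * u‖ := norm_add_le _ _
  _ ≤ ‖m - m * u‖ + ‖m - w * m‖ * ‖u‖ := by gcongr; exact norm_mul_le _ _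
  _ ≤ ε/2 + (ε/2) * 1 := by
      have := mul_le_mul h1 hu1 (norm_nonneg u) (by linarith [norm_nonneg (m - w*m)])
      refine add_le_add h2 this
  _ = ε := by ring

/-- `cfcₙ f b` belongs to any closed non-unital star subalgebra containing `b`. -/
lemma cfcn_mem_A {A : NonUnitalStarSubalgebra ℂ B} (hAc : IsClosed (A : Set B))
    {b : B} (hb : IsSelfAdjoint b) (hbA : b ∈ (A : Set B)) (f : ℝ → ℝ) :
    cfcₙ f b ∈ (A : Set B) := by
  apply cfcn_mem_of_closed hb f _ hAc
  · exact zero_mem A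
  · exact fun x hx y hy => add_mem hx hy
  · intro r x hx
    have h2 : ((r : ℂ)) • x ∈ A := SMulMemClass.smul_mem _ hx
    rwa [show ((r : ℂ)) • x = r • x by
      rw [← algebraMap_smul ℂ r x, Complex.coe_algebraMap]] at h2
  · intro n
    induction n with
    | zero => exact hbA
    | succ n ih => exact mul_mem ih hbA

end SliceAux

section OneSided

open SliceAux

variable {B : Type*} [NonUnitalCStarAlgebra B] [PartialOrder B] [StarOrderedRing B]

lemma condexp_continuous {A : Set B} (P : CondExp A) : Continuous P.toFun :=
  AddMonoidHomClass.continuous_of_bound P.toFun 1 (fun x => by simpa using P.contractive x)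

/-- one-sided module property of a conditional expectation, for elements `m` with
`m* m` and `m m*` in `A`. -/
lemma condexp_one_sided {A : NonUnitalStarSubalgebra ℂ B} (hAc : IsClosed (A : Set B))
    (P : CondExp (A : Set B)) (m : B)
    (h1 : star m * m ∈ (A : Set B)) (h2 : m * star m ∈ (A : Set B)) :
    (∀ a ∈ (A : Set B), P.toFun (m * a) = P.toFun m * a) ∧
    (∀ a ∈ (A : Set B), P.toFun (a * m) = a * P.toFun m) := by
  have key : ∀ ε : ℝ, 0 < ε → ∃ w u : B, w ∈ (A : Set B) ∧ u ∈ (A : Set B) ∧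
      ‖m - w * m * u‖ ≤ ε := by
    intro ε hε
    refine ⟨cfcₙ (gfun (ε^2)) (m * star m), cfcₙ (gfun (ε^2)) (star m * m),
      cfcn_mem_A hAc (mul_star_self_nonneg m).isSelfAdjoint h2 _,
      cfcn_mem_A hAc (star_mul_self_nonneg m).isSelfAdjoint h1 _,
      two_sided_approx m hε⟩
  constructor
  · intro a ha
    have hbound : ∀ ε : ℝ, 0 < ε → ‖P.toFun (m * a) - P.toFun m * a‖ ≤ ε * (2 * ‖a‖ + 1) := by
      intro ε hε
      obtain ⟨w, u, hw, hu, hη⟩ := key ε hε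
      have e1 : P.toFun (w * m * (u * a)) = w * P.toFun m * (u * a) :=
        P.bimodule w hw (u * a) (mul_mem hu ha) m
      have e2 : P.toFun (w * m * u) = w * P.toFun m * u :=
        P.bimodule w hw u hu m
      have hD : P.toFun (m * a) - P.toFun m * a
          = P.toFun ((m - w * m * u) * a) + (P.toFun (w * m * u) - P.toFun m) * a := by
        have expand : (m - w * m * u) * a = m * a - w * m * (u * a) := by noncomm_ring
        rw [expand, map_sub, e1, e2]
        noncomm_ring
      rw [hD]
      have b1 : ‖P.toFun ((m - w * m * u) * a)‖ ≤ ε * ‖a‖ := by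
        refine (P.contractive _).trans ?_
        refine (norm_mul_le _ _).trans ?_
        exact mul_le_mul_of_nonneg_right hη (norm_nonneg a)
      have b2 : ‖(P.toFun (w * m * u) - P.toFun m) * a‖ ≤ ε * ‖a‖ := by
        refine (norm_mul_le _ _).trans ?_
        have : ‖P.toFun (w * m * u) - P.toFun m‖ ≤ ε := by
          rw [← map_sub]
          refine (P.contractive _).trans ?_
          rwa [norm_sub_rev]
        exact mul_le_mul_of_nonneg_right this (norm_nonneg a)
      calc ‖_ + _‖ ≤ _ := norm_add_le _ _
      _ ≤ ε * ‖a‖ + ε * ‖a‖ := add_le_add b1 b2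
      _ ≤ ε * (2 * ‖a‖ + 1) := by nlinarith [norm_nonneg a]
    have : ‖P.toFun (m * a) - P.toFun m * a‖ = 0 := by
      by_contra hne
      have hpos : 0 < ‖P.toFun (m * a) - P.toFun m * a‖ :=
        (norm_nonneg _).lt_of_ne (Ne.symm hne)
      have hK : (0:ℝ) < 2 * ‖a‖ + 1 := by positivity
      have hb2 := hbound (‖P.toFun (m * a) - P.toFun m * a‖ / (2 * (2 * ‖a‖ + 1)))
        (by positivity)
      have h3 : ‖P.toFun (m * a) - P.toFun m * a‖ / (2 * (2 * ‖a‖ + 1)) * (2 * ‖a‖ + 1)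
          = ‖P.toFun (m * a) - P.toFun m * a‖ / 2 := by
        field_simp
      rw [h3] at hb2
      linarith
    rwa [norm_eq_zero, sub_eq_zero] at this
  · intro a ha
    have hbound : ∀ ε : ℝ, 0 < ε → ‖P.toFun (a * m) - a * P.toFun m‖ ≤ ε * (2 * ‖a‖ + 1) := by
      intro ε hε
      obtain ⟨w, u, hw, hu, hη⟩ := key ε hε
      have e1 : P.toFun ((a * w) * m * u) = (a * w) * P.toFun m * u :=
        P.bimodule (a * w) (mul_mem ha hw) u hu m
      have e2 : P.toFun (w * m * u) = w * P.toFun m * u :=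
        P.bimodule w hw u hu m
      have hD : P.toFun (a * m) - a * P.toFun m
          = P.toFun (a * (m - w * m * u)) + a * (P.toFun (w * m * u) - P.toFun m) := by
        have expand : a * (m - w * m * u) = a * m - (a * w) * m * u := by noncomm_ring
        rw [expand, map_sub, e1, e2]
        noncomm_ring
      rw [hD]
      have b1 : ‖P.toFun (a * (m - w * m * u))‖ ≤ ‖a‖ * ε := by
        refine (P.contractive _).trans ?_
        refine (norm_mul_le _ _).trans ?_
        exact mul_le_mul_of_nonneg_left hη (norm_nonneg a)
      have b2 : ‖a * (P.toFun (w * m * u) - P.toFun m)‖ ≤ ‖a‖ * ε := by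
        refine (norm_mul_le _ _).trans ?_
        have : ‖P.toFun (w * m * u) - P.toFun m‖ ≤ ε := by
          rw [← map_sub]
          refine (P.contractive _).trans ?_
          rwa [norm_sub_rev]
        exact mul_le_mul_of_nonneg_left this (norm_nonneg a)
      calc ‖_ + _‖ ≤ _ := norm_add_le _ _
      _ ≤ ‖a‖ * ε + ‖a‖ * ε := add_le_add b1 b2
      _ ≤ ε * (2 * ‖a‖ + 1) := by nlinarith [norm_nonneg a]
    have : ‖P.toFun (a * m) - a * P.toFun m‖ = 0 := by
      by_contra hne
      have hpos : 0 < ‖P.toFun (a * m) - a * P.toFun m‖ :=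
        (norm_nonneg _).lt_of_ne (Ne.symm hne)
      have hK : (0:ℝ) < 2 * ‖a‖ + 1 := by positivity
      have hb2 := hbound (‖P.toFun (a * m) - a * P.toFun m‖ / (2 * (2 * ‖a‖ + 1)))
        (by positivity)
      have h3 : ‖P.toFun (a * m) - a * P.toFun m‖ / (2 * (2 * ‖a‖ + 1)) * (2 * ‖a‖ + 1)
          = ‖P.toFun (a * m) - a * P.toFun m‖ / 2 := by
        field_simp
      rw [h3] at hb2
      linarith
    rwa [norm_eq_zero, sub_eq_zero] at this

end OneSided



section Main

open SliceAux

variable {B : Type*} [NonUnitalCStarAlgebra B] [PartialOrder B] [StarOrderedRing B]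

/-- The defining property of the virtual commutant associated to a slice `M` and a
conditional expectation `P`. -/
def PdP {A : Set B} (P : CondExp A) (M : Submodule ℂ B) (x t : B) : Prop :=
  star t ∈ M ∧ ∀ y ∈ M, t * y = P.toFun (x * y)

lemma PdP_norm_diff {A : Set B} (P : CondExp A) {M : Submodule ℂ B}
    (hM : IsSlice A M) {x x' t t' : B} (h : PdP P M x t) (h' : PdP P M x' t') :
    ‖t - t'‖ ≤ ‖x - x'‖ := by
  obtain ⟨ht1, ht2⟩ := h
  obtain ⟨ht1', ht2'⟩ := h'
  have hd1 : star (t - t') ∈ M := by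
    rw [star_sub]; exact M.sub_mem ht1 ht1'
  have hdy : (t - t') * star (t - t') = P.toFun ((x - x') * star (t - t')) := by
    rw [sub_mul, ht2 _ hd1, ht2' _ hd1, ← map_sub, ← sub_mul]
  have hnorm : ‖t - t'‖ * ‖t - t'‖ ≤ ‖x - x'‖ * ‖t - t'‖ := by
    calc ‖t - t'‖ * ‖t - t'‖ = ‖(t - t') * star (t - t')‖ :=
          (CStarRing.norm_self_mul_star).symm
    _ = ‖P.toFun ((x - x') * star (t - t'))‖ := by rw [hdy]
    _ ≤ ‖(x - x') * star (t - t')‖ := P.contractive _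
    _ ≤ ‖x - x'‖ * ‖star (t - t')‖ := norm_mul_le _ _
    _ = ‖x - x'‖ * ‖t - t'‖ := by rw [norm_star]
  rcases eq_or_lt_of_le (norm_nonneg (t - t')) with h0 | h0
  · rw [← h0]; exact norm_nonneg _
  · exact le_of_mul_le_mul_right hnorm h0

lemma PdP_uniq {A : Set B} (P : CondExp A) {M : Submodule ℂ B}
    (hM : IsSlice A M) {x t t' : B} (h : PdP P M x t) (h' : PdP P M x t') : t = t' := by
  have := PdP_norm_diff P hM h h'
  rw [sub_self, norm_zero] at this
  rw [← sub_eq_zero, ← norm_eq_zero]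
  exact le_antisymm this (norm_nonneg _)

end Main

open SliceAux

/-- Lemma 3.16: if every virtual commutant of `A` in `B` has range in `A`, then every
conditional expectation `P : B → A` preserves slices. -/
theorem statement_7 {B : Type*} [NonUnitalCStarAlgebra B] [PartialOrder B] [StarOrderedRing B]
    (A : NonUnitalStarSubalgebra ℂ B) [IsClosed (A : Set B)]
    (hnd : Nondegenerate (A : Set B))
    (P : CondExp (A : Set B))
    (hvc : VirtualCommutantsTrivial (A : Set B)) :
    ∀ M : Submodule ℂ B, IsSlice (A : Set B) M → ∀ m ∈ M, P.toFun m ∈ M := by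
  classical
  intro M hM m hmM
  have hAc : IsClosed (A : Set B) := ‹_›
  have hcont : Continuous P.toFun := condexp_continuous P
  -- one-sided module property for slice elements
  have hone : ∀ x ∈ M, (∀ a ∈ (A : Set B), P.toFun (x * a) = P.toFun x * a) ∧
      (∀ a ∈ (A : Set B), P.toFun (a * x) = a * P.toFun x) :=
    fun x hx => condexp_one_sided hAc P x (hM.star_mul_mem x hx x hx) (hM.mul_star_mem x hx x hx)
  -- real scalars act on M
  have hMr : ∀ (r : ℝ), ∀ z ∈ M, r • z ∈ M := by
    intro r z hz
    have h2 := M.smul_mem ((r : ℂ)) hz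
    rwa [show ((r : ℂ)) • z = r • z by rw [← algebraMap_smul ℂ r z, Complex.coe_algebraMap]] at h2
  -- generators satisfy the predicate
  have hgen : ∀ p ∈ M, ∀ n ∈ M, PdP P M (p * star n) (P.toFun p * star n) := by
    intro p hp n hn
    constructor
    · rw [star_mul, star_star]
      exact hM.mul_right (star (P.toFun p)) (star_mem (P.mem_range p)) n hn
    · intro y hy
      have hny : star n * y ∈ (A : Set B) := hM.star_mul_mem n hn y hy
      rw [mul_assoc, mul_assoc]
      exact ((hone p hp).1 _ hny).symm
  -- the generating set and its span
  set S : Set B := {z : B | ∃ p ∈ M, ∃ n ∈ M, z = p * star n} with hSdef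
  have hspanPd : ∀ x ∈ Submodule.span ℂ S, ∃ t, PdP P M x t := by
    intro x hx
    induction hx using Submodule.span_induction with
    | mem x hx =>
      obtain ⟨p, hp, n, hn, rfl⟩ := hx
      exact ⟨P.toFun p * star n, hgen p hp n hn⟩
    | zero =>
      refine ⟨0, by simpa using M.zero_mem, fun y hy => ?_⟩
      rw [zero_mul, map_zero]
    | add x y _ _ hx hy =>
      obtain ⟨t1, h1⟩ := hx
      obtain ⟨t2, h2⟩ := hy
      refine ⟨t1 + t2, ?_, fun z hz => ?_⟩
      · rw [star_add]; exact M.add_mem h1.1 h2.1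
      · rw [add_mul, h1.2 z hz, h2.2 z hz, add_mul, map_add]
    | smul c x _ hx =>
      obtain ⟨t, ht⟩ := hx
      refine ⟨c • t, ?_, fun z hz => ?_⟩
      · rw [star_smul]; exact M.smul_mem _ ht.1
      · rw [smul_mul_assoc, ht.2 z hz, smul_mul_assoc, map_smul]
  have hclosurePd : ∀ x ∈ closure ((Submodule.span ℂ S : Submodule ℂ B) : Set B),
      ∃ t, PdP P M x t := by
    intro x hx
    obtain ⟨xs, hxs, hxlim⟩ := mem_closure_iff_seq_limit.mp hx
    choose ts hts using fun n => hspanPd (xs n) (hxs n)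
    have hcauchy : CauchySeq ts := by
      have hxc : CauchySeq xs := hxlim.cauchySeq
      rw [Metric.cauchySeq_iff] at hxc ⊢
      intro ε hε
      obtain ⟨N, hN⟩ := hxc ε hε
      refine ⟨N, fun i hi j hj => ?_⟩
      have := PdP_norm_diff P hM (hts i) (hts j)
      rw [dist_eq_norm]
      calc ‖ts i - ts j‖ ≤ ‖xs i - xs j‖ := this
      _ < ε := by rw [← dist_eq_norm]; exact hN i hi j hj
    obtain ⟨t, htlim⟩ := cauchySeq_tendsto_of_complete hcauchy
    refine ⟨t, ?_, fun y hy => ?_⟩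
    · exact hM.isClosed.mem_of_tendsto ((continuous_star.tendsto t).comp htlim)
        (Filter.Eventually.of_forall fun n => (hts n).1)
    · have l1 : Filter.Tendsto (fun n => ts n * y) Filter.atTop (nhds (t * y)) :=
        htlim.mul tendsto_const_nhds
      have l2 : Filter.Tendsto (fun n => P.toFun (xs n * y)) Filter.atTop
          (nhds (P.toFun (x * y))) :=
        (hcont.tendsto _).comp (hxlim.mul tendsto_const_nhds)
      have heq : (fun n => ts n * y) = (fun n => P.toFun (xs n * y)) :=
        funext fun n => (hts n).2 y hy
      rw [heq] at l1
      exact tendsto_nhds_unique l1 l2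
  -- the virtual commutant as a function
  obtain ⟨φ, hφspec⟩ : ∃ φ : B → B, ∀ x, (∃ t, PdP P M x t) → PdP P M x (φ x) :=
    ⟨fun x => if h : ∃ t, PdP P M x t then h.choose else 0, fun x h => by
      simp only [dif_pos h]; exact h.choose_spec⟩
  have hφ : ∀ x t, PdP P M x t → φ x = t := fun x t ht =>
    PdP_uniq P hM (hφspec x ⟨t, ht⟩) ht
  -- the ideal
  have hspanA : ∀ x ∈ Submodule.span ℂ S, x ∈ (A : Set B) := by
    intro x hx
    induction hx using Submodule.span_induction with
    | mem x hx => obtain ⟨p, hp, n, hn, rfl⟩ := hx; exact hM.mul_star_mem p hp n hn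
    | zero => exact zero_mem A
    | add x y _ _ hx hy => exact add_mem hx hy
    | smul c x _ hx => exact SMulMemClass.smul_mem c hx
  have hspanL : ∀ a ∈ (A : Set B), ∀ z ∈ Submodule.span ℂ S, a * z ∈ Submodule.span ℂ S := by
    intro a ha z hz
    induction hz using Submodule.span_induction with
    | mem z hz =>
      obtain ⟨p, hp, n, hn, rfl⟩ := hz
      exact Submodule.subset_span ⟨a * p, hM.mul_left a ha p hp, n, hn, (mul_assoc _ _ _).symm⟩
    | zero => rw [mul_zero]; exact Submodule.zero_mem _
    | add z w _ _ hz hw => rw [mul_add]; exact Submodule.add_mem _ hz hw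
    | smul c z _ hz => rw [mul_smul_comm]; exact Submodule.smul_mem _ _ hz
  have hspanR : ∀ a ∈ (A : Set B), ∀ z ∈ Submodule.span ℂ S, z * a ∈ Submodule.span ℂ S := by
    intro a ha z hz
    induction hz using Submodule.span_induction with
    | mem z hz =>
      obtain ⟨p, hp, n, hn, rfl⟩ := hz
      refine Submodule.subset_span ⟨p, hp, star a * n, hM.mul_left (star a) (star_mem ha) n hn,
        ?_⟩
      rw [star_mul, star_star, mul_assoc]
    | zero => rw [zero_mul]; exact Submodule.zero_mem _
    | add z w _ _ hz hw => rw [add_mul]; exact Submodule.add_mem _ hz hw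
    | smul c z _ hz => rw [smul_mul_assoc]; exact Submodule.smul_mem _ _ hz
  have hcoe : (((Submodule.span ℂ S).topologicalClosure : Submodule ℂ B) : Set B)
      = closure ((Submodule.span ℂ S : Submodule ℂ B) : Set B) :=
    Submodule.topologicalClosure_coe _
  set I : CIdealIn (A : Set B) :=
    { carrier := closure ((Submodule.span ℂ S : Submodule ℂ B) : Set B)
      subset := closure_minimal hspanA hAc
      zero_mem := subset_closure (Submodule.zero_mem _)
      add_mem := fun x hx y hy => by
        rw [← hcoe] at hx hy ⊢
        exact Submodule.add_mem _ hx hy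
      smul_mem := fun c x hx => by
        rw [← hcoe] at hx ⊢
        exact Submodule.smul_mem _ c hx
      mul_left := fun a ha x hx =>
        map_mem_closure (continuous_mul_left a) hx (fun z hz => hspanL a ha z hz)
      mul_right := fun a ha x hx =>
        map_mem_closure (f := (· * a)) (continuous_mul_right a) hx (fun z hz => hspanR a ha z hz)
      isClosed := isClosed_closure } with hIdef
  -- I.carrier membership gives existence
  have hIPd : ∀ x ∈ I.carrier, ∃ t, PdP P M x t := fun x hx => hclosurePd x hx
  have hIsubA : ∀ x ∈ I.carrier, x ∈ (A : Set B) := fun x hx => I.subset hx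
  -- build the virtual commutant
  set Φ : VirtualCommutant (A : Set B) I.carrier :=
    { toFun := φ
      map_add := fun x hx y hy => by
        have hx' := hφspec x (hIPd x hx)
        have hy' := hφspec y (hIPd y hy)
        refine hφ _ _ ⟨?_, fun z hz => ?_⟩
        · rw [star_add]; exact M.add_mem hx'.1 hy'.1
        · rw [add_mul, hx'.2 z hz, hy'.2 z hz, ← map_add, add_mul]
      map_smul := fun c x hx => by
        have hx' := hφspec x (hIPd x hx)
        refine hφ _ _ ⟨?_, fun z hz => ?_⟩
        · rw [star_smul]; exact M.smul_mem _ hx'.1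
        · rw [smul_mul_assoc, hx'.2 z hz, ← map_smul, smul_mul_assoc]
      left_mod := fun a ha x hx => by
        have hx' := hφspec x (hIPd x hx)
        refine hφ _ _ ⟨?_, fun z hz => ?_⟩
        · rw [star_mul]; exact hM.mul_right (star a) (star_mem ha) _ hx'.1
        · have hxz : x * z ∈ M := hM.mul_left x (hIsubA x hx) z hz
          rw [mul_assoc, hx'.2 z hz, ← (hone (x * z) hxz).2 a ha, ← mul_assoc]
      right_mod := fun a ha x hx => by
        have hx' := hφspec x (hIPd x hx)
        refine hφ _ _ ⟨?_, fun z hz => ?_⟩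
        · rw [star_mul]; exact hM.mul_left (star a) (star_mem ha) _ hx'.1
        · have haz : a * z ∈ M := hM.mul_left a ha z hz
          rw [mul_assoc, hx'.2 (a * z) haz, ← mul_assoc] } with hΦdef
  have hAmem := hvc I Φ
  have hPA : ∀ p ∈ M, ∀ n ∈ M, P.toFun p * star n ∈ (A : Set B) := by
    intro p hp n hn
    have hxI : p * star n ∈ I.carrier :=
      subset_closure (Submodule.subset_span ⟨p, hp, n, hn, rfl⟩)
    have h2 := hAmem _ hxI
    rwa [show Φ.toFun (p * star n) = P.toFun p * star n from hφ _ _ (hgen p hp n hn)] at h2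
  -- final step : P m ∈ M
  have hbA : star m * m ∈ (A : Set B) := hM.star_mul_mem m hmM m hmM
  have hb0 : (0:B) ≤ star m * m := star_mul_self_nonneg m
  have hbsa : IsSelfAdjoint (star m * m) := hb0.isSelfAdjoint
  have hT : ∀ f : ℝ → ℝ, P.toFun m * cfcₙ f (star m * m) ∈ M := by
    intro f
    apply cfcn_mem_of_closed hbsa f {v : B | P.toFun m * v ∈ M}
    · exact hM.isClosed.preimage (continuous_mul_left _)
    · show P.toFun m * 0 ∈ M
      rw [mul_zero]; exact M.zero_mem
    · intro x hx y hy
      show P.toFun m * (x + y) ∈ M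
      rw [mul_add]; exact M.add_mem hx hy
    · intro r x hx
      show P.toFun m * (r • x) ∈ M
      rw [mul_smul_comm]; exact hMr r _ hx
    · intro n
      show P.toFun m * pw (star m * m) n ∈ M
      induction n with
      | zero =>
        show P.toFun m * (star m * m) ∈ M
        rw [← mul_assoc]
        exact hM.mul_left _ (hPA m hmM m hmM) m hmM
      | succ n ih =>
        show P.toFun m * (pw (star m * m) n * (star m * m)) ∈ M
        rw [← mul_assoc]
        exact hM.mul_right _ hbA _ ih
  have hfinal : P.toFun m ∈ closure (M : Set B) := by
    rw [Metric.mem_closure_iff]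
    intro ε hε
    set u := cfcₙ (gfun (ε ^ 2)) (star m * m) with hu
    have huA : u ∈ (A : Set B) := cfcn_mem_A hAc hbsa hbA _
    refine ⟨P.toFun m * u, hT _, ?_⟩
    have happ : ‖m - m * u‖ ≤ ε/2 :=
      le_half_of_sq (norm_nonneg _) hε (approx_mul_g m (by positivity))
    rw [dist_eq_norm]
    have heq2 : P.toFun m - P.toFun m * u = P.toFun (m - m * u) := by
      rw [map_sub, (hone m hmM).1 u huA]
    rw [heq2]
    calc ‖P.toFun (m - m * u)‖ ≤ ‖m - m * u‖ := P.contractive _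
    _ ≤ ε/2 := happ
    _ < ε := by linarith
  rw [hM.isClosed.closure_eq] at hfinal
  exact hfinal
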